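/- arXiv:2406.05614 — 3 statements merged into one kernel-verified Lean document; each statement's English description precedes it below -/
import Mathlib

section
/- For every f ∈ C_c^∞((1,∞), ℂ) and every λ ≥ 0, the distorted Fourier transform diagonalizes the radial Dirichlet Laplacian: √(2/π) ∫₁^∞ sin(λ(s−1)) · (−f''(s) − (2/s)f'(s)) · s ds = λ² · 𝓕_D f(λ). -/
open MeasureTheory Set

/-- The distorted Fourier transform adapted to the radial Dirichlet Laplacian on
the exterior of the unit ball: `𝓕_D f (λ) = √(2/π) ∫₁^∞ sin(λ(s−1)) f(s) s ds`. -/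
noncomputable def distFT (f : ℝ → ℂ) (lam : ℝ) : ℂ :=
  (Real.sqrt (2 / Real.pi) : ℂ) *
    ∫ s in Ioi (1 : ℝ), (Real.sin (lam * (s - 1)) : ℂ) * f s * (s : ℂ)

/-- For every `f ∈ C_c^∞((1,∞), ℂ)` and every `λ ≥ 0`, the distorted
Fourier transform diagonalizes the radial Dirichlet Laplacian:
`√(2/π) ∫₁^∞ sin(λ(s−1)) (−f''(s) − (2/s) f'(s)) s ds = λ² 𝓕_D f (λ)`. -/
theorem distFT_diagonalizes_radial_laplacian
    (f : ℝ → ℂ) (hf : ContDiff ℝ (⊤ : ℕ∞) f) (hsupp : HasCompactSupport f)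
    (hsupp' : tsupport f ⊆ Ioi (1 : ℝ)) (lam : ℝ) (hlam : 0 ≤ lam) :
    (Real.sqrt (2 / Real.pi) : ℂ) *
        (∫ s in Ioi (1 : ℝ),
          (Real.sin (lam * (s - 1)) : ℂ) *
            (-(deriv (deriv f) s) - (2 / (s : ℂ)) * deriv f s) * (s : ℂ))
      = (lam : ℂ) ^ 2 * distFT f lam := by
  -- notation
  set h : ℝ → ℂ := fun s => ((Real.sin (lam * (s - 1)) : ℝ) : ℂ) with hh
  set hd : ℝ → ℂ := fun s => ((lam * Real.cos (lam * (s - 1)) : ℝ) : ℂ) with hhd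
  set g : ℝ → ℂ := fun s => (s : ℂ) * f s with hg
  set dg : ℝ → ℂ := fun s => f s + (s : ℂ) * deriv f s with hdg
  set ddg : ℝ → ℂ := fun s => 2 * deriv f s + (s : ℂ) * deriv (deriv f) s with hddg
  have hfd : Differentiable ℝ f := hf.differentiable (by simp)
  have hf' : ContDiff ℝ (⊤ : ℕ∞) (deriv f) := (contDiff_infty_iff_deriv.1 hf).2
  have hf'd : Differentiable ℝ (deriv f) := hf'.differentiable (by simp)
  have hf'' : ContDiff ℝ (⊤ : ℕ∞) (deriv (deriv f)) := (contDiff_infty_iff_deriv.1 hf').2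
  -- smoothness of sin(λ(s-1)) and λcos(λ(s-1))
  have haff : ∀ x : ℝ, HasDerivAt (fun s : ℝ => lam * (s - 1)) lam x := by
    intro x
    simpa using ((hasDerivAt_id x).sub_const 1).const_mul lam
  have hsin : ∀ x : ℝ, HasDerivAt h (hd x) x := by
    intro x
    have := (Real.hasDerivAt_sin (lam * (x - 1))).comp x (haff x)
    have := this.ofReal_comp
    simpa [hh, hhd, mul_comm] using this
  have hcos : ∀ x : ℝ, HasDerivAt hd (-(lam : ℂ) ^ 2 * h x) x := by
    intro x
    have := (((Real.hasDerivAt_cos (lam * (x - 1))).comp x (haff x)).const_mul lam).ofReal_comp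
    convert this using 1
    · rfl
    simp only [hh]
    push_cast
    ring
  -- derivatives of g and dg
  have hgd : ∀ x : ℝ, HasDerivAt g (dg x) x := by
    intro x
    have h1 : HasDerivAt (fun s : ℝ => (s : ℂ)) 1 x := by
      simpa using (hasDerivAt_id x).ofReal_comp
    convert h1.mul (hfd x).hasDerivAt using 1
    · rfl
    · rfl
    simp [hdg]
  have hdgd : ∀ x : ℝ, HasDerivAt dg (ddg x) x := by
    intro x
    have h1 : HasDerivAt (fun s : ℝ => (s : ℂ)) 1 x := by
      simpa using (hasDerivAt_id x).ofReal_comp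
    have := ((hfd x).hasDerivAt).add (h1.mul (hf'd x).hasDerivAt)
    convert this using 1
    · rfl
    · rfl
    simp [hddg]
    ring
  -- the combined function for integration by parts
  set F : ℝ → ℂ := fun s => h s * dg s - hd s * g s with hF
  have hFd : ∀ x : ℝ, HasDerivAt F (h x * ddg x + (lam : ℂ) ^ 2 * (h x * g x)) x := by
    intro x
    have := ((hsin x).mul (hdgd x)).sub ((hcos x).mul (hgd x))
    convert this using 1
    · rfl
    · rfl
    ring
  -- continuity facts
  have hcont : Continuous h := by
    have : Continuous fun s : ℝ => Real.sin (lam * (s - 1)) :=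
      Real.continuous_sin.comp (by continuity)
    exact Complex.continuous_ofReal.comp this
  have hcontg : Continuous g := Complex.continuous_ofReal.mul hf.continuous
  have hcontdg : Continuous dg := hf.continuous.add (Complex.continuous_ofReal.mul hf'.continuous)
  have hcontddg : Continuous ddg :=
    ((continuous_const.mul hf'.continuous)).add (Complex.continuous_ofReal.mul hf''.continuous)
  -- compact support facts
  have hsg : HasCompactSupport g := hsupp.mul_left
  have hsdg : HasCompactSupport dg := hsupp.add hsupp.deriv.mul_left
  have hsddg : HasCompactSupport ddg := hsupp.deriv.mul_left.add hsupp.deriv.deriv.mul_left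
  have hFeq : F = fun s => h s * dg s + (-(hd s)) * g s := by
    funext s; simp only [hF]; ring
  have hsF : HasCompactSupport F := by
    rw [hFeq]
    exact (hsdg.mul_left).add (hsg.mul_left)
  have hF1 : ContDiff ℝ 1 F := by
    have hsmooth_sin : ContDiff ℝ (⊤ : ℕ∞) h := by
      have : ContDiff ℝ (⊤ : ℕ∞) fun s : ℝ => Real.sin (lam * (s - 1)) :=
        Real.contDiff_sin.comp (contDiff_const.mul (contDiff_id.sub contDiff_const))
      exact Complex.ofRealCLM.contDiff.comp this
    have hsmooth_cos : ContDiff ℝ (⊤ : ℕ∞) hd := by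
      have : ContDiff ℝ (⊤ : ℕ∞) fun s : ℝ => lam * Real.cos (lam * (s - 1)) :=
        contDiff_const.mul
          (Real.contDiff_cos.comp (contDiff_const.mul (contDiff_id.sub contDiff_const)))
      exact Complex.ofRealCLM.contDiff.comp this
    have hsmooth_coe : ContDiff ℝ (⊤ : ℕ∞) fun s : ℝ => (s : ℂ) :=
      Complex.ofRealCLM.contDiff
    have : ContDiff ℝ (⊤ : ℕ∞) F :=
      (hsmooth_sin.mul (hf.add (hsmooth_coe.mul hf'))).sub
        (hsmooth_cos.mul (hsmooth_coe.mul hf))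
    exact this.of_le (by exact_mod_cast le_top)
  -- integration by parts: ∫_{Ioi 1} deriv F = -F 1 = 0
  have hF1zero : F 1 = 0 := by
    have hf1 : f 1 = 0 :=
      image_eq_zero_of_notMem_tsupport (fun hmem => (lt_irrefl (1:ℝ)) (hsupp' hmem))
    simp [hF, hh, hhd, hg, hf1]
  have hibp : ∫ x in Ioi (1 : ℝ), deriv F x = 0 := by
    rw [hsF.integral_Ioi_deriv_eq hF1 1, hF1zero, neg_zero]
  have hderivF : deriv F = fun x => h x * ddg x + (lam : ℂ) ^ 2 * (h x * g x) :=
    funext fun x => (hFd x).deriv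
  rw [hderivF] at hibp
  -- integrability on Ioi 1
  have hint1 : IntegrableOn (fun x => h x * ddg x) (Ioi (1 : ℝ)) :=
    ((hcont.mul hcontddg).integrable_of_hasCompactSupport hsddg.mul_left).integrableOn
  have hint2 : IntegrableOn (fun x => h x * g x) (Ioi (1 : ℝ)) :=
    ((hcont.mul hcontg).integrable_of_hasCompactSupport hsg.mul_left).integrableOn
  rw [integral_add hint1 (hint2.const_mul _), integral_const_mul] at hibp
  have key : ∫ x in Ioi (1 : ℝ), h x * ddg x
      = -((lam : ℂ) ^ 2 * ∫ x in Ioi (1 : ℝ), h x * g x) := by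
    linear_combination hibp
  -- rewrite the LHS integrand
  have hLHS : ∫ s in Ioi (1 : ℝ),
      (Real.sin (lam * (s - 1)) : ℂ) *
        (-(deriv (deriv f) s) - (2 / (s : ℂ)) * deriv f s) * (s : ℂ)
      = ∫ x in Ioi (1 : ℝ), -(h x * ddg x) := by
    refine setIntegral_congr_fun measurableSet_Ioi fun s hs => ?_
    have hs0 : (s : ℂ) ≠ 0 := by
      exact_mod_cast ne_of_gt (lt_trans one_pos hs)
    field_simp [hh, hddg]
    ring
  have hRHS : ∫ s in Ioi (1 : ℝ), (Real.sin (lam * (s - 1)) : ℂ) * f s * (s : ℂ)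
      = ∫ x in Ioi (1 : ℝ), h x * g x := by
    refine setIntegral_congr_fun measurableSet_Ioi fun s _ => ?_
    simp [hh, hg]
    ring
  rw [hLHS, integral_neg, key, distFT, hRHS]
  ring
end

section
/- Distorted Fourier inversion: for every f ∈ C_c^∞((1,∞), ℂ) and every r > 1, one has √(2/π) ∫₀^∞ (sin(λ(r−1))/r) · 𝓕_D f(λ) dλ = f(r), the integral converging absolutely since 𝓕_D f decays rapidly. -/
open MeasureTheory Set
open scoped FourierTransform Real

lemma odd_integral_zero (h : ℝ → ℂ) (ho : ∀ x, h (-x) = - h x) :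
    ∫ x, h x = 0 := by
  have h1 : ∫ x : ℝ, h (-x) = ∫ x : ℝ, h x := integral_neg_eq_self h _
  simp only [ho] at h1
  rw [integral_neg] at h1
  linear_combination (-1/2 : ℂ) * h1

lemma even_integral (h : ℝ → ℂ) (he : ∀ x, h (-x) = h x) (hi : Integrable h) :
    ∫ x, h x = 2 * ∫ x in Ioi (0:ℝ), h x := by
  have h2 := integral_comp_neg_Iic (0:ℝ) h
  simp only [he, neg_zero] at h2
  rw [← intervalIntegral.integral_Iic_add_Ioi (b := (0:ℝ)) hi.integrableOn hi.integrableOn, h2]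
  ring

lemma integral_Ioi_one_comp (F : ℝ → ℂ) :
    ∫ s in Ioi (1:ℝ), F s = ∫ x in Ioi (0:ℝ), F (x + 1) := by
  rw [← integral_indicator measurableSet_Ioi, ← integral_indicator measurableSet_Ioi,
    ← integral_add_right_eq_self (fun x => (Ioi (1:ℝ)).indicator F x) 1]
  congr 1 with x
  simp only [indicator_apply, mem_Ioi, lt_add_iff_pos_left]

lemma sin_mul_integrable (h : ℝ → ℂ) (hint : Integrable h) (a : ℝ) :
    Integrable fun x => (Real.sin (a * x) : ℂ) * h x := by
  refine hint.bdd_mul (c := 1) ?_ (ae_of_all _ fun x => ?_)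
  · exact (Complex.continuous_ofReal.comp
      (Real.continuous_sin.comp (continuous_const.mul continuous_id))).aestronglyMeasurable
  · rw [Complex.norm_real, Real.norm_eq_abs]
    exact abs_le.mpr ⟨Real.neg_one_le_sin _, Real.sin_le_one _⟩

lemma cos_mul_integrable (h : ℝ → ℂ) (hint : Integrable h) (a : ℝ) :
    Integrable fun x => (Real.cos (a * x) : ℂ) * h x := by
  refine hint.bdd_mul (c := 1) ?_ (ae_of_all _ fun x => ?_)
  · exact (Complex.continuous_ofReal.comp
      (Real.continuous_cos.comp (continuous_const.mul continuous_id))).aestronglyMeasurable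
  · rw [Complex.norm_real, Real.norm_eq_abs]
    exact abs_le.mpr ⟨Real.neg_one_le_cos _, Real.cos_le_one _⟩

lemma FT_odd (h : ℝ → ℂ) (hint : Integrable h) (hodd : ∀ x, h (-x) = - h x) (ξ : ℝ) :
    𝓕 h ξ = (-2 * Complex.I) * ∫ x in Ioi (0:ℝ), (Real.sin (2 * π * ξ * x) : ℂ) * h x := by
  have hsin : Integrable fun v => (Real.sin (2 * π * ξ * v) : ℂ) * h v :=
    sin_mul_integrable h hint _
  have hcos : Integrable fun v => (Real.cos (2 * π * ξ * v) : ℂ) * h v :=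
    cos_mul_integrable h hint _
  rw [Real.fourier_real_eq_integral_exp_smul]
  have expand : ∀ v : ℝ, Complex.exp (↑(-2 * π * v * ξ) * Complex.I) • h v
      = (Real.cos (2 * π * ξ * v) : ℂ) * h v
        - Complex.I * ((Real.sin (2 * π * ξ * v) : ℂ) * h v) := by
    intro v
    rw [smul_eq_mul, show (-2 * π * v * ξ : ℝ) = -(2 * π * ξ * v) by ring, Complex.exp_mul_I]
    push_cast
    rw [Complex.cos_neg, Complex.sin_neg]
    ring
  simp only [expand]
  rw [integral_sub hcos (hsin.const_mul _), integral_const_mul]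
  have hc0 : ∫ v, (Real.cos (2 * π * ξ * v) : ℂ) * h v = 0 := by
    refine odd_integral_zero _ fun v => ?_
    rw [show 2 * π * ξ * -v = -(2 * π * ξ * v) by ring, Real.cos_neg, hodd v]
    ring
  have hs : ∫ v, (Real.sin (2 * π * ξ * v) : ℂ) * h v
      = 2 * ∫ x in Ioi (0:ℝ), (Real.sin (2 * π * ξ * x) : ℂ) * h x := by
    refine even_integral _ (fun v => ?_) hsin
    rw [show 2 * π * ξ * -v = -(2 * π * ξ * v) by ring, Real.sin_neg, hodd v]
    push_cast
    ring
  rw [hc0, hs]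
  ring


/-- Distorted Fourier inversion: for every `f ∈ C_c^∞((1,∞), ℂ)`
and every `r > 1`, `√(2/π) ∫₀^∞ (sin(λ(r−1))/r) 𝓕_D f(λ) dλ = f(r)`. -/
theorem distFT_inversion
    (f : ℝ → ℂ) (hf : ContDiff ℝ (⊤ : ℕ∞) f) (hsupp : HasCompactSupport f)
    (hsupp' : tsupport f ⊆ Ioi (1 : ℝ)) (r : ℝ) (hr : 1 < r) :
    (Real.sqrt (2 / Real.pi) : ℂ) *
        (∫ lam in Ioi (0 : ℝ), ((Real.sin (lam * (r - 1)) / r : ℝ) : ℂ) * distFT f lam)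
      = f r := by
  have hπ : (0:ℝ) < π := Real.pi_pos
  set c : ℂ := (Real.sqrt (2 / Real.pi) : ℂ) with hc
  set t : ℝ := r - 1 with ht
  have htpos : 0 < t := by simp [ht]; linarith
  -- the odd extension
  set g : ℝ → ℂ := fun x => f (x + 1) * ((x + 1 : ℝ) : ℂ) - f (-x + 1) * ((-x + 1 : ℝ) : ℂ)
    with hgdef
  have hgodd : ∀ x, g (-x) = - g x := by
    intro x
    simp only [hgdef, neg_neg]
    ring
  have hg_smooth : ContDiff ℝ (⊤ : ℕ∞) g := by
    have h1 : ContDiff ℝ (⊤:ℕ∞) fun x : ℝ => x + 1 := contDiff_id.add contDiff_const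
    have h2 : ContDiff ℝ (⊤:ℕ∞) fun x : ℝ => -x + 1 := contDiff_id.neg.add contDiff_const
    exact ((hf.comp h1).mul (Complex.ofRealCLM.contDiff.comp h1)).sub
      ((hf.comp h2).mul (Complex.ofRealCLM.contDiff.comp h2))
  have hg_supp : HasCompactSupport g := by
    have e1 : HasCompactSupport fun x : ℝ => f (x + 1) :=
      hsupp.comp_homeomorph (Homeomorph.addRight (1:ℝ))
    have e2 : HasCompactSupport fun x : ℝ => f (-x + 1) :=
      hsupp.comp_homeomorph ((Homeomorph.neg ℝ).trans (Homeomorph.addRight (1:ℝ)))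
    have e1' : HasCompactSupport fun x : ℝ => f (x + 1) * ((x + 1 : ℝ) : ℂ) := e1.mul_right
    have e2' : HasCompactSupport fun x : ℝ => f (-x + 1) * ((-x + 1 : ℝ) : ℂ) := e2.mul_right
    refine HasCompactSupport.intro (e1'.union e2') fun x hx => ?_
    simp only [mem_union, not_or] at hx
    have z1 := image_eq_zero_of_notMem_tsupport hx.1
    have z2 := image_eq_zero_of_notMem_tsupport hx.2
    simp only [hgdef]
    rw [z1, z2, sub_zero]
  have hg_int : Integrable g := hg_smooth.continuous.integrable_of_hasCompactSupport hg_supp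
  -- Schwartz bounds, hence integrability of the Fourier transform
  have hdecay : ∀ k n : ℕ, ∃ C, ∀ x, ‖x‖ ^ k * ‖iteratedFDeriv ℝ n g x‖ ≤ C := by
    intro k n
    have hcont : Continuous fun x : ℝ => ‖x‖ ^ k * ‖iteratedFDeriv ℝ n g x‖ :=
      (continuous_norm.pow k).mul (hg_smooth.continuous_iteratedFDeriv (by exact_mod_cast le_top)).norm
    have hcs : HasCompactSupport fun x : ℝ => ‖x‖ ^ k * ‖iteratedFDeriv ℝ n g x‖ :=
      (hg_supp.iteratedFDeriv n).norm.mul_left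
    obtain ⟨C, hC⟩ := hcont.bddAbove_range_of_hasCompactSupport hcs
    exact ⟨C, fun x => hC (mem_range_self x)⟩
  let gS : SchwartzMap ℝ ℂ := ⟨g, hg_smooth, hdecay⟩
  have h𝓕int : Integrable (𝓕 g) := by
    have he : 𝓕 g = (SchwartzMap.fourierTransformCLE ℂ (SchwartzMap ℝ ℂ) gS : ℝ → ℂ) :=
      rfl
    rw [he]
    exact SchwartzMap.integrable _
  -- the sine transform
  set S : ℝ → ℂ := fun a => ∫ x in Ioi (0:ℝ), (Real.sin (a * x) : ℂ) * g x with hS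
  have hFk : ∀ ξ : ℝ, 𝓕 g ξ = (-2 * Complex.I) * S (2 * π * ξ) := fun ξ =>
    FT_odd g hg_int hgodd ξ
  have hSodd : ∀ a : ℝ, S (-a) = - S a := by
    intro a
    simp only [hS]
    rw [← integral_neg]
    refine setIntegral_congr_fun measurableSet_Ioi fun x _ => ?_
    rw [show -a * x = -(a * x) by ring, Real.sin_neg]
    push_cast
    ring
  have hFodd : ∀ ξ : ℝ, 𝓕 g (-ξ) = - 𝓕 g ξ := by
    intro ξ
    rw [hFk, hFk, show 2 * π * -ξ = -(2 * π * ξ) by ring, hSodd]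
    ring
  -- Fourier inversion
  have hgt : g t = f r * (r : ℂ) := by
    have hz : f (-t + 1) = 0 := by
      by_contra hne
      have hmem : -t + 1 ∈ tsupport f := subset_tsupport f hne
      have := hsupp' hmem
      simp only [mem_Ioi] at this
      linarith
    simp only [hgdef, hz, zero_mul, sub_zero]
    simp only [ht, sub_add_cancel]
  have h1 : (-2 * Complex.I) *
      (- ∫ x in Ioi (0:ℝ), (Real.sin (2 * π * t * x) : ℂ) * 𝓕 g x) = f r * (r : ℂ) := by
    have hinv : 𝓕⁻ (𝓕 g) t = g t :=
      hg_int.fourierInv_fourier_eq h𝓕int hg_smooth.continuous.continuousAt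
    rw [Real.fourierInv_eq_fourier_neg, FT_odd (𝓕 g) h𝓕int hFodd (-t)] at hinv
    have h3 : ∫ x in Ioi (0:ℝ), (Real.sin (2 * π * -t * x) : ℂ) * 𝓕 g x
        = - ∫ x in Ioi (0:ℝ), (Real.sin (2 * π * t * x) : ℂ) * 𝓕 g x := by
      rw [← integral_neg]
      refine setIntegral_congr_fun measurableSet_Ioi fun x _ => ?_
      rw [show 2 * π * -t * x = -(2 * π * t * x) by ring, Real.sin_neg]
      push_cast
      ring
    rw [h3] at hinv
    rw [hinv, hgt]
  -- rewrite distFT in terms of S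
  have hdist : ∀ lam : ℝ, distFT f lam = c * S lam := by
    intro lam
    rw [distFT, ← hc]
    congr 1
    rw [integral_Ioi_one_comp (fun s => (Real.sin (lam * (s - 1)) : ℂ) * f s * (s : ℂ))]
    refine setIntegral_congr_fun measurableSet_Ioi fun x hx => ?_
    simp only [mem_Ioi] at hx
    have hz : f (-x + 1) = 0 := by
      by_contra hne
      have hmem : -x + 1 ∈ tsupport f := subset_tsupport f hne
      have := hsupp' hmem
      simp only [mem_Ioi] at this
      linarith
    simp only [hgdef, hz, zero_mul, sub_zero, add_sub_cancel_right]
    ring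
  -- massage the goal integral
  have hgoal1 : (∫ lam in Ioi (0:ℝ), ((Real.sin (lam * t) / r : ℝ) : ℂ) * distFT f lam)
      = (c / (r:ℂ)) * ∫ lam in Ioi (0:ℝ), (Real.sin (lam * t) : ℂ) * S lam := by
    rw [← integral_const_mul]
    refine setIntegral_congr_fun measurableSet_Ioi fun lam _ => ?_
    rw [hdist lam]
    push_cast
    ring
  -- rescale
  have hscale := integral_comp_mul_left_Ioi
    (fun lam => (Real.sin (lam * t) : ℂ) * S lam) 0 (by positivity : (0:ℝ) < 2 * π)
  simp only [mul_zero, smul_eq_mul] at hscale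
  -- identify the rescaled integrand using hFk
  have hVX : ∫ x in Ioi (0:ℝ), (Real.sin (2 * π * x * t) : ℂ) * S (2 * π * x)
      = (Complex.I / 2) * ∫ x in Ioi (0:ℝ), (Real.sin (2 * π * t * x) : ℂ) * 𝓕 g x := by
    rw [← integral_const_mul]
    refine setIntegral_congr_fun measurableSet_Ioi fun x _ => ?_
    rw [hFk x, show 2 * π * x * t = 2 * π * t * x by ring]
    linear_combination (Real.sin (2 * π * t * x) : ℂ) * S (2 * π * x) * Complex.I_mul_I
  -- put everything together
  have hcc : c * c = 2 / (π : ℂ) := by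
    rw [hc, ← Complex.ofReal_mul, Real.mul_self_sqrt (by positivity)]
    push_cast
    ring
  rw [hVX, Complex.real_smul] at hscale
  rw [show (((2 * π)⁻¹ : ℝ) : ℂ) = (2 * (π:ℂ))⁻¹ by push_cast; ring] at hscale
  rw [hgoal1]
  have hrne : (r : ℂ) ≠ 0 := by
    simp only [ne_eq, Complex.ofReal_eq_zero]
    linarith
  have hπne : ((π : ℝ) : ℂ) ≠ 0 := by
    simp only [ne_eq, Complex.ofReal_eq_zero]
    linarith
  set X : ℂ := ∫ x in Ioi (0:ℝ), (Real.sin (2 * π * t * x) : ℂ) * 𝓕 g x with hX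
  set U : ℂ := ∫ lam in Ioi (0:ℝ), (Real.sin (lam * t) : ℂ) * S lam with hU
  have hπne : ((π : ℝ) : ℂ) ≠ 0 := by
    simp only [ne_eq, Complex.ofReal_eq_zero]
    linarith
  have hU2 : U = (π : ℂ) * Complex.I * X := by
    field_simp at hscale
    linear_combination (-1 : ℂ) * hscale
  rw [hU2, show c * (c / ↑r * ((π:ℂ) * Complex.I * X)) = (c * c) * ((π:ℂ) * Complex.I * X) / ↑r
    by ring, hcc]
  field_simp
  linear_combination h1
end

section
/- If g : ℝ → ℂ is an odd Schwartz function, then for every λ > 0 the iterated integral (2/π) ∫₁^∞ sin(λ(s−1)) · ( ∫₀^∞ sin(μ(s−1)) g(μ) dμ ) ds equals g(λ); here the inner integral, as a function of s, decays rapidly, so the outer integral converges absolutely. Equivalently, 𝓕_D ∘ 𝓕_D⁻¹ acts as the identity on odd Schwartz functions restricted to (0,∞). -/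
open MeasureTheory Set FourierTransform Real Complex

/-- Fourier transform of an odd Schwartz function as a sine integral. -/
lemma fourier_odd_eq_sine (g : SchwartzMap ℝ ℂ) (hodd : ∀ x : ℝ, g (-x) = -g x) (w : ℝ) :
    𝓕 (⇑g) w
      = (-2 * Complex.I) *
          ∫ x in Ioi (0 : ℝ), (Real.sin (2 * Real.pi * x * w) : ℂ) * g x := by
  rw [Real.fourier_real_eq_integral_exp_smul]
  set φ : ℝ → ℂ := fun v => Complex.exp (↑(-2 * Real.pi * v * w) * Complex.I) * g v with hφ
  have hsm : ∀ v : ℝ, Complex.exp (↑(-2 * Real.pi * v * w) * Complex.I) • g v = φ v :=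
    fun v => rfl
  simp_rw [hsm]
  have hInt : Integrable φ := by
    refine g.integrable.bdd_mul (c := 1) ?_ (Filter.Eventually.of_forall fun x => ?_)
    · exact (Complex.continuous_exp.comp
        ((Complex.continuous_ofReal.comp (by continuity)).mul continuous_const)).aestronglyMeasurable
    · rw [Complex.norm_exp]
      simp
  have hsplit : (∫ v, φ v) = (∫ v in Iic (0:ℝ), φ v) + ∫ v in Ioi (0:ℝ), φ v :=
    (intervalIntegral.integral_Iic_add_Ioi hInt.integrableOn hInt.integrableOn).symm
  have hneg : (∫ x in Ioi (0:ℝ), φ (-x)) = ∫ x in Iic (0:ℝ), φ x := by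
    simpa using integral_comp_neg_Ioi (0:ℝ) φ
  rw [hsplit, ← hneg, ← integral_add hInt.comp_neg.integrableOn hInt.integrableOn,
    ← integral_const_mul]
  refine setIntegral_congr_fun measurableSet_Ioi fun x _ => ?_
  simp only [hφ, hodd x]
  rw [show (-2 * Real.pi * -x * w : ℝ) = 2 * Real.pi * x * w by ring,
    show (-2 * Real.pi * x * w : ℝ) = -(2 * Real.pi * x * w) by ring]
  simp only [Complex.ofReal_neg, Complex.exp_mul_I, Complex.cos_neg, Complex.sin_neg,
    ← Complex.ofReal_cos, ← Complex.ofReal_sin]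
  ring

/-- If `g : ℝ → ℂ` is an odd Schwartz function, then for every
`λ > 0`, `(2/π) ∫₁^∞ sin(λ(s−1)) (∫₀^∞ sin(μ(s−1)) g(μ) dμ) ds = g(λ)`;
i.e. `𝓕_D ∘ 𝓕_D⁻¹` is the identity on odd Schwartz functions restricted to `(0,∞)`. -/
theorem distFT_comp_inverse_eq_id_of_odd_schwartz
    (g : SchwartzMap ℝ ℂ) (hodd : ∀ x : ℝ, g (-x) = -g x) (lam : ℝ) (hlam : 0 < lam) :
    ((2 / Real.pi : ℝ) : ℂ) *
        (∫ s in Ioi (1 : ℝ),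
          (Real.sin (lam * (s - 1)) : ℂ) *
            ∫ mu in Ioi (0 : ℝ), (Real.sin (mu * (s - 1)) : ℂ) * g mu)
      = g lam := by
  have hpi : (0:ℝ) < Real.pi := Real.pi_pos
  set G : SchwartzMap ℝ ℂ := SchwartzMap.fourierTransformCLM ℂ g with hGdef
  have hGco : ⇑G = 𝓕 (⇑g) := rfl
  -- inner integral in terms of G
  have hinner : ∀ t : ℝ,
      (∫ mu in Ioi (0:ℝ), (Real.sin (mu * t) : ℂ) * g mu) = (Complex.I / 2) * G (t / (2 * Real.pi)) := by
    intro t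
    have h := fourier_odd_eq_sine g hodd (t / (2 * Real.pi))
    have harg : ∀ x : ℝ, 2 * Real.pi * x * (t / (2 * Real.pi)) = x * t := by
      intro x; field_simp
    simp_rw [harg] at h
    rw [← hGco] at h
    rw [h, ← mul_assoc]
    have hone : Complex.I / 2 * (-2 * Complex.I) = 1 := by
      have hII : Complex.I * Complex.I = -1 := Complex.I_mul_I
      field_simp
      linear_combination (-1 : ℂ) * hII
    rw [hone, one_mul]
  -- shift the outer integral from Ioi 1 to Ioi 0
  have hshift :
      (∫ s in Ioi (1 : ℝ),
          (Real.sin (lam * (s - 1)) : ℂ) *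
            ∫ mu in Ioi (0 : ℝ), (Real.sin (mu * (s - 1)) : ℂ) * g mu)
        = ∫ t in Ioi (0 : ℝ),
            (Real.sin (lam * t) : ℂ) *
              ∫ mu in Ioi (0 : ℝ), (Real.sin (mu * t) : ℂ) * g mu := by
    have := (measurePreserving_add_right (volume : Measure ℝ) 1).setIntegral_preimage_emb
      (measurableEmbedding_addRight 1)
      (fun s => (Real.sin (lam * (s - 1)) : ℂ) *
        ∫ mu in Ioi (0 : ℝ), (Real.sin (mu * (s - 1)) : ℂ) * g mu) (Ioi (1:ℝ))
    rw [← this]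
    have hpre : (fun x : ℝ => x + 1) ⁻¹' Ioi (1:ℝ) = Ioi (0:ℝ) := by
      ext x; simp
    rw [hpre]
    simp
  rw [hshift]
  simp_rw [hinner]
  -- scaling t = 2π ξ
  have hscale := integral_comp_mul_left_Ioi
    (fun t : ℝ => (Real.sin (lam * t) : ℂ) * ((Complex.I / 2) * G (t / (2 * Real.pi)))) 0
    (by positivity : (0:ℝ) < 2 * Real.pi)
  rw [mul_zero] at hscale
  have harg2 : ∀ x : ℝ, (2 * Real.pi * x) / (2 * Real.pi) = x := by
    intro x; field_simp
  simp_rw [harg2] at hscale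
  have hscale' :
      (∫ t in Ioi (0:ℝ), (Real.sin (lam * t) : ℂ) * ((Complex.I / 2) * G (t / (2 * Real.pi))))
        = ((2 * Real.pi : ℝ)) • ∫ x in Ioi (0:ℝ),
            (Real.sin (lam * (2 * Real.pi * x)) : ℂ) * ((Complex.I / 2) * G x) := by
    rw [hscale, smul_smul, mul_inv_cancel₀ (by positivity : (2 * Real.pi : ℝ) ≠ 0), one_smul]
  rw [hscale']
  -- final evaluation via Fourier inversion
  have hGodd := fourier_odd_eq_sine g hodd
  have hGint : Integrable (𝓕 (⇑g)) := by
    rw [← hGco]; exact G.integrable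
  have hinv : 𝓕⁻ (𝓕 (⇑g)) lam = g lam := by
    have := g.continuous.fourierInv_fourier_eq g.integrable hGint
    rw [this]
  have hGrep := fourier_odd_eq_sine G (by
    intro x
    rw [hGco, fourier_odd_eq_sine g hodd, fourier_odd_eq_sine g hodd x]
    have hA : (∫ y in Ioi (0:ℝ), (Real.sin (2 * Real.pi * y * -x) : ℂ) * g y)
        = -∫ y in Ioi (0:ℝ), (Real.sin (2 * Real.pi * y * x) : ℂ) * g y := by
      rw [← integral_neg]
      refine setIntegral_congr_fun measurableSet_Ioi fun y _ => ?_
      rw [show 2 * Real.pi * y * -x = -(2 * Real.pi * y * x) by ring, Real.sin_neg]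
      push_cast
      ring
    rw [hA]
    ring) (-lam)
  rw [Real.fourierInv_eq_fourier_neg, ← hGco, hGrep] at hinv
  rw [← hinv]
  have hsin : ∀ x : ℝ, (Real.sin (2 * Real.pi * x * -lam) : ℂ)
      = -(Real.sin (lam * (2 * Real.pi * x)) : ℂ) := by
    intro x
    rw [show 2 * Real.pi * x * -lam = -(lam * (2 * Real.pi * x)) by ring, Real.sin_neg]
    push_cast; ring
  simp_rw [hsin]
  rw [show (∫ x in Ioi (0:ℝ), -(Real.sin (lam * (2 * Real.pi * x)) : ℂ) * G x)
      = -∫ x in Ioi (0:ℝ), (Real.sin (lam * (2 * Real.pi * x)) : ℂ) * G x by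
    rw [← integral_neg]; congr 1; ext x; ring]
  have hpull : (∫ x in Ioi (0:ℝ), (Real.sin (lam * (2 * Real.pi * x)) : ℂ) * ((Complex.I / 2) * G x))
      = (Complex.I / 2) * ∫ x in Ioi (0:ℝ), (Real.sin (lam * (2 * Real.pi * x)) : ℂ) * G x := by
    rw [← integral_const_mul]
    congr 1; ext x; ring
  rw [hpull, Complex.real_smul]
  have hpic : ((Real.pi : ℝ) : ℂ) ≠ 0 := by exact_mod_cast Real.pi_ne_zero
  push_cast
  field_simp
end
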